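/- Let n ≥ 1 and let W : ℝⁿ → ℝ be convex, continuously differentiable on ℝⁿ, twice continuously differentiable on ℝⁿ ∖ {0}, with ∇W(0) = 0, and such that for all 0 < μ ≤ M < ∞ there exists γ > 0 with ⟨∇²W(z₀)ζ, ζ⟩ ≥ γ|ζ|² for all ζ ∈ ℝⁿ and all z₀ with μ ≤ |z₀| ≤ M. Then the gradient map is strictly monotone: for all z₁, z₂ ∈ ℝⁿ with z₁ ≠ z₂, ⟨∇W(z₂) − ∇W(z₁), z₂ − z₁⟩ > 0. In particular, ⟨∇W(z), z⟩ > 0 for every z ∈ ℝⁿ with z ≠ 0. -/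

import Mathlib

open MeasureTheory Set Metric Filter
open scoped RealInnerProductSpace Topology ENNReal

noncomputable section

/-- `φ` is a smooth test function compactly supported in `ω`. -/
def IsTestOn {n : ℕ} (ω : Set (EuclideanSpace ℝ (Fin n))) (φ : EuclideanSpace ℝ (Fin n) → ℝ) : Prop :=
  ContDiff ℝ (⊤ : ℕ∞) φ ∧ HasCompactSupport φ ∧ tsupport φ ⊆ ω

/-- **Strict monotonicity of `∇W`.** For a convex `W`, `C¹` on `ℝⁿ`, `C²` away from the origin,
with `∇W(0) = 0` and Hessian uniformly positive on annuli, the gradient map is strictly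
monotone; in particular `⟨∇W(z), z⟩ > 0` for `z ≠ 0`. -/
theorem stmt_13 {n : ℕ} (hn : 1 ≤ n)
    (W : EuclideanSpace ℝ (Fin n) → ℝ)
    (hWconv : ConvexOn ℝ Set.univ W)
    (hWC1 : ContDiff ℝ 1 W)
    (hWC2 : ContDiffOn ℝ 2 W {(0 : EuclideanSpace ℝ (Fin n))}ᶜ)
    (hW0 : gradient W 0 = 0)
    (hWell : ∀ μ M : ℝ, 0 < μ → μ ≤ M →
      ∃ γ : ℝ, 0 < γ ∧
        ∀ z₀ : EuclideanSpace ℝ (Fin n), μ ≤ ‖z₀‖ → ‖z₀‖ ≤ M →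
          ∀ ζ : EuclideanSpace ℝ (Fin n),
            γ * ‖ζ‖ ^ 2 ≤ ⟪fderiv ℝ (gradient W) z₀ ζ, ζ⟫) :
    (∀ z₁ z₂ : EuclideanSpace ℝ (Fin n), z₁ ≠ z₂ →
      0 < ⟪gradient W z₂ - gradient W z₁, z₂ - z₁⟫) ∧
    (∀ z : EuclideanSpace ℝ (Fin n), z ≠ 0 → 0 < ⟪gradient W z, z⟫) := by
  classical
  have hWdiff : Differentiable ℝ W := hWC1.differentiable one_ne_zero
  -- relation between gradient and fderiv
  have hgradrel : ∀ x y : EuclideanSpace ℝ (Fin n), ⟪gradient W x, y⟫ = fderiv ℝ W x y := by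
    intro x y
    exact InnerProductSpace.toDual_symm_apply
  -- differentiability of gradient away from 0
  have hgraddiff : ∀ x : EuclideanSpace ℝ (Fin n), x ≠ 0 → DifferentiableAt ℝ (gradient W) x := by
    intro x hx
    have h2 : ContDiffAt ℝ 2 W x := hWC2.contDiffAt (isOpen_compl_singleton.mem_nhds hx)
    have h1 : ContDiffAt ℝ 1 (fderiv ℝ W) x := h2.fderiv_right (by norm_num)
    have hd : DifferentiableAt ℝ (fderiv ℝ W) x := h1.differentiableAt one_ne_zero
    have hlin : DifferentiableAt ℝ
        (fun L : StrongDual ℝ (EuclideanSpace ℝ (Fin n)) =>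
          (InnerProductSpace.toDual ℝ (EuclideanSpace ℝ (Fin n))).symm L) (fderiv ℝ W x) :=
      ((InnerProductSpace.toDual ℝ
        (EuclideanSpace ℝ (Fin n))).symm.toContinuousLinearEquiv.differentiableAt)
    exact hlin.comp x hd
  have key : ∀ z₁ z₂ : EuclideanSpace ℝ (Fin n), z₁ ≠ z₂ → 0 < ⟪gradient W z₂ - gradient W z₁, z₂ - z₁⟫ := by
    intro z₁ z₂ hne
    set v : EuclideanSpace ℝ (Fin n) := z₂ - z₁ with hv_def
    have hv : v ≠ 0 := sub_ne_zero.mpr (Ne.symm hne)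
    set ψ : ℝ → EuclideanSpace ℝ (Fin n) := fun t => z₁ + t • v with hψ_def
    set g : ℝ → ℝ := fun t => ⟪gradient W (ψ t), v⟫ with hg_def
    have hψderiv : ∀ t : ℝ, HasDerivAt ψ v t := by
      intro t
      have h1 : HasDerivAt (fun s : ℝ => s • v) ((1 : ℝ) • v) t :=
        (hasDerivAt_id t).smul_const v
      have h2 := h1.const_add z₁
      rw [one_smul] at h2
      exact h2
    have hψ0 : ψ 0 = z₁ := by simp [hψ_def]
    have hψ1 : ψ 1 = z₂ := by simp [hψ_def, hv_def]
    -- φ is convex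
    set φ : ℝ → ℝ := fun t => W (ψ t) with hφ_def
    have hφconv : ConvexOn ℝ univ φ := by
      have := hWconv.comp_affineMap (AffineMap.lineMap z₁ z₂ : ℝ →ᵃ[ℝ] EuclideanSpace ℝ (Fin n))
      have heq : (W ∘ (AffineMap.lineMap z₁ z₂ : ℝ →ᵃ[ℝ] EuclideanSpace ℝ (Fin n))) = φ := by
        funext t
        simp [hφ_def, hψ_def, AffineMap.lineMap_apply_module', hv_def, add_comm]
      rw [Set.preimage_univ] at this
      rwa [heq] at this
    have hφderiv : ∀ t : ℝ, HasDerivAt φ (g t) t := by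
      intro t
      have h1 : HasDerivAt φ (fderiv ℝ W (ψ t) v) t :=
        (hWdiff (ψ t)).hasFDerivAt.comp_hasDerivAt t (hψderiv t)
      rw [hg_def]
      simpa [hgradrel] using h1
    have hgmono : Monotone g := by
      have hd : ∀ x ∈ (univ : Set ℝ), DifferentiableAt ℝ φ x :=
        fun x _ => (hφderiv x).differentiableAt
      have := hφconv.monotoneOn_deriv hd
      have hderiv_eq : deriv φ = g := funext fun t => (hφderiv t).deriv
      rw [hderiv_eq] at this
      exact monotoneOn_univ.mp this
    -- zero point of ψ is unique
    obtain ⟨t₀, ht₀⟩ : ∃ t₀ : ℝ, ∀ t, ψ t = 0 → t = t₀ := by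
      by_cases h : ∃ t, ψ t = 0
      · obtain ⟨s, hs⟩ := h
        refine ⟨s, fun t ht => ?_⟩
        have : (t - s) • v = 0 := by
          have := sub_eq_zero.mpr (ht.trans hs.symm)
          simpa [hψ_def, sub_smul] using this
        rcases smul_eq_zero.mp this with h1 | h1
        · linarith [sub_eq_zero.mp (by exact_mod_cast h1)]
        · exact absurd h1 hv
      · exact ⟨0, fun t ht => absurd ⟨t, ht⟩ h⟩
    -- choose a subinterval of [0,1] avoiding t₀
    obtain ⟨a, b, hab, hsub, hnot⟩ :
        ∃ a b : ℝ, a < b ∧ Icc a b ⊆ Icc (0:ℝ) 1 ∧ t₀ ∉ Icc a b := by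
      by_cases h : t₀ ∈ Icc (0:ℝ) (1/4)
      · refine ⟨1/2, 3/4, by norm_num, Icc_subset_Icc (by norm_num) (by norm_num), ?_⟩
        intro hc
        have := h.2; have := hc.1; linarith
      · exact ⟨0, 1/4, by norm_num, Icc_subset_Icc le_rfl (by norm_num), h⟩
    have hψne : ∀ t ∈ Icc a b, ψ t ≠ 0 := by
      intro t ht h
      exact hnot (ht₀ t h ▸ ht)
    -- min and max of ‖ψ t‖ on [a,b]
    have hψcont : Continuous ψ := by
      exact continuous_const.add (continuous_id.smul continuous_const)
    have hncont : ContinuousOn (fun t => ‖ψ t‖) (Icc a b) :=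
      (hψcont.norm).continuousOn
    obtain ⟨tm, htm, hmin⟩ :=
      isCompact_Icc.exists_isMinOn (nonempty_Icc.mpr hab.le) hncont
    obtain ⟨tM, htM, hmax⟩ :=
      isCompact_Icc.exists_isMaxOn (nonempty_Icc.mpr hab.le) hncont
    have hμ : 0 < ‖ψ tm‖ := norm_pos_iff.mpr (hψne tm htm)
    have hμM : ‖ψ tm‖ ≤ ‖ψ tM‖ := isMinOn_iff.mp hmin tM htM
    obtain ⟨γ, hγ, hγle⟩ := hWell _ _ hμ hμM
    -- derivative of g on [a,b]
    have hgderiv : ∀ t ∈ Icc a b,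
        HasDerivAt g ⟪fderiv ℝ (gradient W) (ψ t) v, v⟫ t := by
      intro t ht
      have h1 : HasDerivAt (fun s => gradient W (ψ s))
          (fderiv ℝ (gradient W) (ψ t) v) t :=
        (hgraddiff (ψ t) (hψne t ht)).hasFDerivAt.comp_hasDerivAt t (hψderiv t)
      have h2 := h1.inner ℝ (hasDerivAt_const t v)
      simpa [hg_def] using h2
    -- mean value estimate
    have hMV : γ * ‖v‖ ^ 2 * (b - a) ≤ g b - g a := by
      refine (convex_Icc a b).mul_sub_le_image_sub_of_le_deriv
        (fun t ht => (hgderiv t ht).differentiableAt.continuousAt.continuousWithinAt)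
        (fun t ht => ((hgderiv t (interior_subset ht)).differentiableAt).differentiableWithinAt)
        ?_ a (left_mem_Icc.mpr hab.le) b (right_mem_Icc.mpr hab.le) hab.le
      intro t ht
      rw [interior_Icc] at ht
      have htIcc : t ∈ Icc a b := Ioo_subset_Icc_self ht
      rw [(hgderiv t htIcc).deriv]
      exact hγle (ψ t) (isMinOn_iff.mp hmin t htIcc) (isMaxOn_iff.mp hmax t htIcc) v
    have h0a : g 0 ≤ g a := hgmono (hsub (left_mem_Icc.mpr hab.le)).1
    have hb1 : g b ≤ g 1 := hgmono (hsub (right_mem_Icc.mpr hab.le)).2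
    have hpos : 0 < γ * ‖v‖ ^ 2 * (b - a) := by
      have : 0 < ‖v‖ := norm_pos_iff.mpr hv
      have : 0 < b - a := sub_pos.mpr hab
      positivity
    have hfinal : 0 < g 1 - g 0 := by linarith
    have hgoal : ⟪gradient W z₂ - gradient W z₁, z₂ - z₁⟫ = g 1 - g 0 := by
      simp only [hg_def]
      rw [hψ1, hψ0, inner_sub_left]
    rw [hgoal]
    exact hfinal
  refine ⟨key, fun z hz => ?_⟩
  have := key 0 z (Ne.symm hz)
  simpa [hW0] using this
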